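/- (No cycles of length ≥ 2) Let n ≥ 2 and let t_0, …, t_{n-1} be distinct normal forms of the rewrite system R over {d, e, +, ·} such that t_i·e ≡ t_{i+1 mod n} for all i. Then a contradiction arises; i.e., there are no such cycles. -/

import Mathlib

/-- Ground terms over constants d, e with binary operations + (add) and · (app). -/
inductive Tm : Type
  | d : Tm
  | e : Tm
  | add : Tm → Tm → Tm
  | app : Tm → Tm → Tm
  deriving DecidableEq

open Tm

/-- Root rewrite steps: instances of the oriented rules. -/
inductive Root : Tm → Tm → Prop
  | addE (x) : Root (add x e) x
  | eAdd (x) : Root (add e x) x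
  | assoc (x y z) : Root (add (add x y) z) (add x (add y z))
  | appAdd (x y z) : Root (app (add x y) z) (app y (app x z))
  | appD (x y) : Root (app (app d x) y) (app x (add y x))
  | appE (x) : Root (app e x) x
  | dE : Root (app d e) e

/-- One rewrite step: a root step applied at some subterm position. -/
inductive Step : Tm → Tm → Prop
  | root {t u} : Root t u → Step t u
  | addL {t t' u} : Step t t' → Step (add t u) (add t' u)
  | addR {t u u'} : Step u u' → Step (add t u) (add t u')
  | appL {t t' u} : Step t t' → Step (app t u) (app t' u)
  | appR {t u u'} : Step u u' → Step (app t u) (app t u')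

/-- Zero or more rewrite steps. -/
def Steps : Tm → Tm → Prop := Relation.ReflTransGen Step

/-- A normal form is a term to which no rule applies. -/
def NormalForm (t : Tm) : Prop := ∀ u, ¬ Step t u

/-- Provable equality in the equational theory (reflexive symmetric transitive
congruence closure of the rule instances). -/
def TermEq : Tm → Tm → Prop := Relation.EqvGen Step

/-! ### Termination measure -/

def mu : Tm → ℕ
  | Tm.d => 2
  | Tm.e => 2
  | Tm.add a b => 2 * mu a + mu b + 1
  | Tm.app a b => mu b * 2 ^ (mu a)

lemma mu_pos : ∀ t, 2 ≤ mu t := by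
  intro t
  induction t with
  | d => simp [mu]
  | e => simp [mu]
  | add a b iha ihb => simp only [mu]; omega
  | app a b iha ihb =>
      simp only [mu]
      calc 2 ≤ mu b := ihb
      _ = mu b * 1 := by ring
      _ ≤ mu b * 2 ^ mu a := by
          exact Nat.mul_le_mul_left _ (Nat.one_le_two_pow)

lemma root_mu {t u : Tm} (h : Root t u) : mu u < mu t := by
  induction h with
  | addE x => simp only [mu]; omega
  | eAdd x => simp only [mu]; omega
  | assoc x y z => simp only [mu]; omega
  | appAdd x y z =>
      simp only [mu]
      rw [mul_comm (mu z) (2 ^ mu x), mul_assoc]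
      have h1 : 2 ^ (mu x) * (mu z * 2 ^ mu y) = mu z * 2 ^ (mu x + mu y) := by
        rw [pow_add]; ring
      rw [h1]
      have hz : 0 < mu z := lt_of_lt_of_le (by norm_num) (mu_pos z)
      exact Nat.mul_lt_mul_of_pos_left (Nat.pow_lt_pow_right (by norm_num) (by omega)) hz
  | appD x y =>
      simp only [mu]
      have hx := mu_pos x
      have hy := mu_pos y
      -- goal: (2*mu y + mu x + 1) * 2 ^ mu x < mu y * 2 ^ (mu x * 2^2)
      have h1 : 2 * mu y + mu x + 1 < mu y * 2 ^ (mu x + 2) := by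
        have h2 : mu x + 3 ≤ 2 ^ (mu x + 2) := by
          have := Nat.lt_two_pow_self (n := mu x + 2)
          omega
        calc 2 * mu y + mu x + 1 < mu y * (mu x + 3) := by nlinarith
        _ ≤ mu y * 2 ^ (mu x + 2) := Nat.mul_le_mul_left _ h2
      calc (2 * mu y + mu x + 1) * 2 ^ mu x
          < (mu y * 2 ^ (mu x + 2)) * 2 ^ mu x := by
            exact Nat.mul_lt_mul_of_pos_right h1 (Nat.pow_pos (by norm_num))
        _ = mu y * 2 ^ (2 * mu x + 2) := by rw [mul_assoc, ← pow_add]; ring_nf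
        _ ≤ mu y * 2 ^ (mu x * 2 ^ 2) := by
            apply Nat.mul_le_mul_left
            apply Nat.pow_le_pow_right (by norm_num)
            omega
  | appE x =>
      simp only [mu]
      have := mu_pos x
      nlinarith
  | dE => simp [mu]

lemma step_mu {t u : Tm} (h : Step t u) : mu u < mu t := by
  induction h with
  | root h => exact root_mu h
  | addL _ ih => simp only [mu]; omega
  | addR _ ih => simp only [mu]; omega
  | appL _ ih =>
      simp only [mu]
      exact Nat.mul_lt_mul_of_pos_left (Nat.pow_lt_pow_right (by norm_num) ih)
        (lt_of_lt_of_le (by norm_num) (mu_pos _))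
  | appR _ ih =>
      simp only [mu]
      exact Nat.mul_lt_mul_of_pos_right ih (Nat.pow_pos (by norm_num))

lemma steps_mu_le {t u : Tm} (h : Steps t u) : mu u ≤ mu t := by
  induction h with
  | refl => exact le_refl _
  | tail _ h ih => exact le_trans (le_of_lt (step_mu h)) ih
/-! ### Basic helpers -/

lemma no_step_e {u : Tm} : ¬ Step e u := by
  intro h; cases h with | root r => cases r

lemma no_step_d {u : Tm} : ¬ Step d u := by
  intro h; cases h with | root r => cases r

def Joins (u v : Tm) : Prop := ∃ w, Steps u w ∧ Steps v w

lemma steps_refl (a : Tm) : Steps a a := Relation.ReflTransGen.refl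

lemma steps_one {a b : Tm} (h : Step a b) : Steps a b := Relation.ReflTransGen.single h

lemma steps_trans {a b c : Tm} (h : Steps a b) (h' : Steps b c) : Steps a c :=
  Relation.ReflTransGen.trans h h'

lemma steps_head {a b c : Tm} (h : Step a b) (h' : Steps b c) : Steps a c :=
  Relation.ReflTransGen.head h h'

lemma steps_two {a b c : Tm} (h : Step a b) (h' : Step b c) : Steps a c :=
  steps_head h (steps_one h')

lemma Joins.symm' {u v : Tm} (h : Joins u v) : Joins v u := by
  obtain ⟨w, h1, h2⟩ := h; exact ⟨w, h2, h1⟩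

lemma joins_self (a : Tm) : Joins a a := ⟨a, steps_refl a, steps_refl a⟩

lemma steps_addL {a a' b : Tm} (h : Steps a a') : Steps (add a b) (add a' b) :=
  Relation.ReflTransGen.lift (fun x => add x b) (fun _ _ hs => Step.addL hs) _ _ h

lemma steps_addR {a b b' : Tm} (h : Steps b b') : Steps (add a b) (add a b') :=
  Relation.ReflTransGen.lift (fun x => add a x) (fun _ _ hs => Step.addR hs) _ _ h

lemma steps_appL {a a' b : Tm} (h : Steps a a') : Steps (app a b) (app a' b) :=
  Relation.ReflTransGen.lift (fun x => app x b) (fun _ _ hs => Step.appL hs) _ _ h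

lemma steps_appR {a b b' : Tm} (h : Steps b b') : Steps (app a b) (app a b') :=
  Relation.ReflTransGen.lift (fun x => app a x) (fun _ _ hs => Step.appR hs) _ _ h

/-! ### Local confluence -/

lemma confl_root_any : ∀ {t u v : Tm}, Root t u → Step t v → Joins u v := by
  intro t u v r s
  cases r with
  | addE x =>
      cases s with
      | root r2 =>
          cases r2 with
          | addE => exact joins_self _
          | eAdd => exact joins_self _
          | assoc p q =>
              exact ⟨add p q, steps_refl _, steps_one (Step.addR (Step.root (Root.addE q)))⟩
      | addL s' => exact ⟨_, steps_one s', steps_one (Step.root (Root.addE _))⟩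
      | addR s' => exact absurd s' no_step_e
  | eAdd x =>
      cases s with
      | root r2 =>
          cases r2 with
          | addE => exact joins_self _
          | eAdd => exact joins_self _
      | addL s' => exact absurd s' no_step_e
      | addR s' => exact ⟨_, steps_one s', steps_one (Step.root (Root.eAdd _))⟩
  | assoc x y z =>
      cases s with
      | root r2 =>
          cases r2 with
          | addE => exact ⟨add x y, steps_one (Step.addR (Step.root (Root.addE y))), steps_refl _⟩
          | assoc => exact joins_self _
      | addL s' =>
          cases s' with
          | root r3 =>
              cases r3 with
              | addE =>
                  exact ⟨add x z, steps_one (Step.addR (Step.root (Root.eAdd z))), steps_refl _⟩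
              | eAdd =>
                  exact ⟨add y z, steps_one (Step.root (Root.eAdd _)), steps_refl _⟩
              | assoc p q =>
                  refine ⟨add p (add q (add y z)), steps_one (Step.root (Root.assoc _ _ _)), ?_⟩
                  exact steps_two (Step.root (Root.assoc _ _ _)) (Step.addR (Step.root (Root.assoc _ _ _)))
          | addL s'' =>
              exact ⟨_, steps_one (Step.addL s''), steps_one (Step.root (Root.assoc _ _ _))⟩
          | addR s'' =>
              exact ⟨_, steps_one (Step.addR (Step.addL s'')), steps_one (Step.root (Root.assoc _ _ _))⟩
      | addR s' =>
          exact ⟨_, steps_one (Step.addR (Step.addR s')), steps_one (Step.root (Root.assoc _ _ _))⟩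
  | appAdd x y z =>
      cases s with
      | root r2 =>
          cases r2 with
          | appAdd => exact joins_self _
      | appL s' =>
          cases s' with
          | root r3 =>
              cases r3 with
              | addE => exact ⟨app x z, steps_one (Step.root (Root.appE _)), steps_refl _⟩
              | eAdd => exact ⟨app y z, steps_one (Step.appR (Step.root (Root.appE _))), steps_refl _⟩
              | assoc p q =>
                  refine ⟨app y (app q (app p z)), steps_one (Step.appR (Step.root (Root.appAdd _ _ _))), ?_⟩
                  exact steps_two (Step.root (Root.appAdd _ _ _)) (Step.root (Root.appAdd _ _ _))
          | addL s'' =>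
              exact ⟨_, steps_one (Step.appR (Step.appL s'')), steps_one (Step.root (Root.appAdd _ _ _))⟩
          | addR s'' =>
              exact ⟨_, steps_one (Step.appL s''), steps_one (Step.root (Root.appAdd _ _ _))⟩
      | appR s' =>
          exact ⟨_, steps_one (Step.appR (Step.appR s')), steps_one (Step.root (Root.appAdd _ _ _))⟩
  | appD x y =>
      cases s with
      | root r2 =>
          cases r2 with
          | appD => exact joins_self _
      | appL s' =>
          cases s' with
          | root r3 =>
              cases r3 with
              | dE =>
                  refine ⟨y, steps_two (Step.root (Root.appE _)) (Step.root (Root.addE _)), ?_⟩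
                  exact steps_one (Step.root (Root.appE _))
          | appL s'' => exact absurd s'' no_step_d
          | appR s'' =>
              refine ⟨_, steps_two (Step.appL s'') (Step.appR (Step.addR s'')), ?_⟩
              exact steps_one (Step.root (Root.appD _ _))
      | appR s' =>
          exact ⟨_, steps_one (Step.appR (Step.addL s')), steps_one (Step.root (Root.appD _ _))⟩
  | appE x =>
      cases s with
      | root r2 =>
          cases r2 with
          | appE => exact joins_self _
      | appL s' => exact absurd s' no_step_e
      | appR s' => exact ⟨_, steps_one s', steps_one (Step.root (Root.appE _))⟩
  | dE =>
      cases s with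
      | root r2 =>
          cases r2 with
          | dE => exact joins_self _
      | appL s' => exact absurd s' no_step_d
      | appR s' => exact absurd s' no_step_e

lemma local_confl : ∀ (t : Tm) {u v : Tm}, Step t u → Step t v → Joins u v := by
  intro t
  induction t with
  | d => intro u v h1 _; exact absurd h1 no_step_d
  | e => intro u v h1 _; exact absurd h1 no_step_e
  | add a b iha ihb =>
      intro u v h1 h2
      cases h1 with
      | root r1 => exact confl_root_any r1 h2
      | addL s1 =>
          cases h2 with
          | root r2 => exact (confl_root_any r2 (Step.addL s1)).symm'
          | addL s2 =>
              obtain ⟨w, hw1, hw2⟩ := iha s1 s2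
              exact ⟨add w b, steps_addL hw1, steps_addL hw2⟩
          | addR s2 =>
              exact ⟨_, steps_one (Step.addR s2), steps_one (Step.addL s1)⟩
      | addR s1 =>
          cases h2 with
          | root r2 => exact (confl_root_any r2 (Step.addR s1)).symm'
          | addL s2 =>
              exact ⟨_, steps_one (Step.addL s2), steps_one (Step.addR s1)⟩
          | addR s2 =>
              obtain ⟨w, hw1, hw2⟩ := ihb s1 s2
              exact ⟨add a w, steps_addR hw1, steps_addR hw2⟩
  | app a b iha ihb =>
      intro u v h1 h2
      cases h1 with
      | root r1 => exact confl_root_any r1 h2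
      | appL s1 =>
          cases h2 with
          | root r2 => exact (confl_root_any r2 (Step.appL s1)).symm'
          | appL s2 =>
              obtain ⟨w, hw1, hw2⟩ := iha s1 s2
              exact ⟨app w b, steps_appL hw1, steps_appL hw2⟩
          | appR s2 =>
              exact ⟨_, steps_one (Step.appR s2), steps_one (Step.appL s1)⟩
      | appR s1 =>
          cases h2 with
          | root r2 => exact (confl_root_any r2 (Step.appR s1)).symm'
          | appL s2 =>
              exact ⟨_, steps_one (Step.appL s2), steps_one (Step.appR s1)⟩
          | appR s2 =>
              obtain ⟨w, hw1, hw2⟩ := ihb s1 s2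
              exact ⟨app a w, steps_appR hw1, steps_appR hw2⟩

/-! ### Newman's lemma and confluence -/

lemma confl_aux : ∀ (n : ℕ), ∀ a : Tm, mu a < n → ∀ b c, Steps a b → Steps a c → Joins b c := by
  intro n
  induction n with
  | zero => intro a h; exact absurd h (Nat.not_lt_zero _)
  | succ n IH =>
      intro a ha b c hab hac
      rcases Relation.ReflTransGen.cases_head hab with rfl | ⟨b1, hb1, hb1b⟩
      · exact ⟨c, hac, steps_refl c⟩
      rcases Relation.ReflTransGen.cases_head hac with rfl | ⟨c1, hc1, hc1c⟩
      · exact ⟨b, steps_refl b, hab⟩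
      obtain ⟨d0, hd1, hd2⟩ := local_confl a hb1 hc1
      obtain ⟨w1, hw1, hw2⟩ := IH b1 (by have := step_mu hb1; omega) _ _ hb1b hd1
      obtain ⟨w2, hv1, hv2⟩ := IH c1 (by have := step_mu hc1; omega) _ _ hc1c (steps_trans hd2 hw2)
      exact ⟨w2, steps_trans hw1 hv2, hv1⟩

lemma confl {a b c : Tm} (h1 : Steps a b) (h2 : Steps a c) : Joins b c :=
  confl_aux (mu a + 1) a (Nat.lt_succ_self _) b c h1 h2

lemma exists_nf_aux : ∀ (n : ℕ), ∀ a : Tm, mu a < n → ∃ r, Steps a r ∧ NormalForm r := by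
  intro n
  induction n with
  | zero => intro a h; exact absurd h (Nat.not_lt_zero _)
  | succ n IH =>
      intro a ha
      rcases Classical.em (∃ u, Step a u) with ⟨u, hu⟩ | h
      · obtain ⟨r, hr1, hr2⟩ := IH u (by have := step_mu hu; omega)
        exact ⟨r, steps_head hu hr1, hr2⟩
      · push_neg at h
        exact ⟨a, steps_refl a, h⟩

lemma exists_nf (a : Tm) : ∃ r, Steps a r ∧ NormalForm r :=
  exists_nf_aux (mu a + 1) a (Nat.lt_succ_self _)

lemma normal_steps {a b : Tm} (h : Steps a b) (hn : NormalForm a) : b = a := by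
  rcases Relation.ReflTransGen.cases_head h with rfl | ⟨c, hc, _⟩
  · rfl
  · exact absurd hc (hn c)

lemma steps_normal_unique {a r r' : Tm} (h1 : Steps a r) (h2 : Steps a r')
    (hr : NormalForm r) (hr' : NormalForm r') : r = r' := by
  obtain ⟨w, hw1, hw2⟩ := confl h1 h2
  rw [← normal_steps hw1 hr, ← normal_steps hw2 hr']

lemma rtg_steps {a b : Tm} (h : Relation.ReflTransGen Steps a b) : Steps a b := by
  induction h with
  | refl => exact steps_refl _
  | tail _ h2 ih => exact steps_trans ih h2

lemma termEq_joins {a b : Tm} (h : TermEq a b) : Joins a b := by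
  induction h with
  | rel x y h => exact ⟨y, steps_one h, steps_refl y⟩
  | refl x => exact joins_self x
  | symm x y _ ih => exact ih.symm'
  | trans x y z _ _ ih1 ih2 =>
      obtain ⟨c1, hx, hy⟩ := ih1
      obtain ⟨c2, hy', hz⟩ := ih2
      obtain ⟨w, hw1, hw2⟩ := confl hy hy'
      exact ⟨w, steps_trans hx hw1, steps_trans hz hw2⟩

lemma termEq_steps_normal {a b : Tm} (h : TermEq a b) (hb : NormalForm b) : Steps a b := by
  obtain ⟨c, h1, h2⟩ := termEq_joins h
  rwa [normal_steps h2 hb] at h1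

/-! ### Normal form structure -/

lemma steps_normal_to {t r w : Tm} (h1 : Steps t r) (hr : NormalForm r) (h2 : Steps t w) :
    Steps w r := by
  obtain ⟨c, hw, hr'⟩ := confl h2 h1
  rwa [normal_steps hr' hr] at hw

lemma NormalForm.add_left {a b : Tm} (h : NormalForm (add a b)) : NormalForm a :=
  fun _ s => h _ (Step.addL s)
lemma NormalForm.add_right {a b : Tm} (h : NormalForm (add a b)) : NormalForm b :=
  fun _ s => h _ (Step.addR s)
lemma NormalForm.add_ne_e_left {a b : Tm} (h : NormalForm (add a b)) : a ≠ e := by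
  intro he; subst he; exact h _ (Step.root (Root.eAdd _))
lemma NormalForm.add_ne_e_right {a b : Tm} (h : NormalForm (add a b)) : b ≠ e := by
  intro he; subst he; exact h _ (Step.root (Root.addE _))
lemma NormalForm.add_not_add {a b x y : Tm} (h : NormalForm (add a b)) : a ≠ add x y := by
  intro he; subst he; exact h _ (Step.root (Root.assoc _ _ _))
lemma NormalForm.app_left {a b : Tm} (h : NormalForm (app a b)) : NormalForm a :=
  fun _ s => h _ (Step.appL s)
lemma NormalForm.app_right {a b : Tm} (h : NormalForm (app a b)) : NormalForm b :=
  fun _ s => h _ (Step.appR s)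
lemma NormalForm.app_ne_e {a b : Tm} (h : NormalForm (app a b)) : a ≠ e := by
  intro he; subst he; exact h _ (Step.root (Root.appE _))
lemma NormalForm.app_not_add {a b x y : Tm} (h : NormalForm (app a b)) : a ≠ add x y := by
  intro he; subst he; exact h _ (Step.root (Root.appAdd _ _ _))
lemma NormalForm.app_not_dapp {a b x : Tm} (h : NormalForm (app a b)) : a ≠ app d x := by
  intro he; subst he; exact h _ (Step.root (Root.appD _ _))
lemma NormalForm.app_not_de {a b : Tm} (h : NormalForm (app a b)) : ¬(a = d ∧ b = e) := by
  rintro ⟨rfl, rfl⟩; exact h _ (Step.root Root.dE)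

lemma nf_e : NormalForm e := fun _ s => no_step_e s
lemma nf_d : NormalForm d := fun _ s => no_step_d s

lemma mk_nf_add {a b : Tm} (ha : NormalForm a) (hb : NormalForm b) (hae : a ≠ e)
    (hbe : b ≠ e) (hadd : ∀ x y, a ≠ add x y) : NormalForm (add a b) := by
  intro u h
  cases h with
  | root r =>
      cases r with
      | addE => exact hbe rfl
      | eAdd => exact hae rfl
      | assoc => exact hadd _ _ rfl
  | addL s => exact ha _ s
  | addR s => exact hb _ s

lemma mk_nf_app {a b : Tm} (ha : NormalForm a) (hb : NormalForm b) (hae : a ≠ e)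
    (hadd : ∀ x y, a ≠ add x y) (hdx : ∀ x, a ≠ app d x) (hde : ¬(a = d ∧ b = e)) :
    NormalForm (app a b) := by
  intro u h
  cases h with
  | root r =>
      cases r with
      | appAdd => exact hadd _ _ rfl
      | appD => exact hdx _ rfl
      | appE => exact hae rfl
      | dE => exact hde ⟨rfl, rfl⟩
  | appL s => exact ha _ s
  | appR s => exact hb _ s

lemma normal_fn_shape {a b : Tm} (h : NormalForm (app a b)) :
    a = d ∨ ∃ p q, a = app p q ∧ p ≠ d := by
  cases a with
  | d => exact Or.inl rfl
  | e => exact absurd rfl h.app_ne_e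
  | add x y => exact absurd rfl h.app_not_add
  | app p q =>
      refine Or.inr ⟨p, q, rfl, ?_⟩
      intro hp; subst hp
      exact h.app_not_dapp rfl

/-! ### d-count -/

def dc : Tm → ℕ
  | Tm.d => 1
  | Tm.e => 0
  | Tm.add a b => dc a + dc b
  | Tm.app a b => dc a + dc b

lemma dc_pos {t : Tm} (h : NormalForm t) (he : t ≠ e) : 1 ≤ dc t := by
  induction t with
  | d => simp [dc]
  | e => exact absurd rfl he
  | add a b iha _ =>
      have := iha h.add_left h.add_ne_e_left
      simp only [dc]; omega
  | app a b iha _ =>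
      have := iha h.app_left h.app_ne_e
      simp only [dc]; omega

lemma dc_app_two : ∀ (a b : Tm), NormalForm (app a b) → 2 ≤ dc a + dc b := by
  intro a
  induction a with
  | d =>
      intro b h
      have hb : b ≠ e := fun hbe => h.app_not_de ⟨rfl, hbe⟩
      have := dc_pos h.app_right hb
      simp only [dc]; omega
  | e => intro b h; exact absurd rfl h.app_ne_e
  | add x y => intro b h; exact absurd rfl h.app_not_add
  | app p q ihp _ =>
      intro b h
      have hpq : NormalForm (app p q) := h.app_left
      have := ihp q hpq
      simp only [dc]; omega

lemma dc_one_eq_d {x : Tm} (h : NormalForm x) (hdc : dc x = 1) : x = d := by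
  cases x with
  | d => rfl
  | e => simp [dc] at hdc
  | add a b =>
      have h1 := dc_pos h.add_left h.add_ne_e_left
      have h2 := dc_pos h.add_right h.add_ne_e_right
      simp only [dc] at hdc; omega
  | app a b =>
      have := dc_app_two a b h
      simp only [dc] at hdc; omega

/-! ### Key counting and shape lemmas -/

lemma mu_arg_lt (x y : Tm) : mu y < mu (app x y) := by
  simp only [mu]
  have h4 : 4 ≤ 2 ^ mu x := by
    calc 4 = 2 ^ 2 := rfl
    _ ≤ 2 ^ mu x := Nat.pow_le_pow_right (by norm_num) (mu_pos x)
  have := mu_pos y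
  nlinarith

lemma acc_nf : ∀ (n : ℕ), ∀ v x s : Tm, mu (add v x) < n → NormalForm v → NormalForm x →
    Steps (add v x) s → NormalForm s → dc s = dc v + dc x := by
  intro n
  induction n with
  | zero => intro v x s h; exact absurd h (Nat.not_lt_zero _)
  | succ n IH =>
      intro v x s hmu hv hx hsteps hs
      by_cases hxe : x = e
      · subst hxe
        have hsv : s = v := steps_normal_unique hsteps (steps_one (Step.root (Root.addE v))) hs hv
        subst hsv; simp [dc]
      cases v with
      | e =>
          have hsx : s = x := steps_normal_unique hsteps (steps_one (Step.root (Root.eAdd x))) hs hx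
          subst hsx; simp [dc]
      | d =>
          have hn : NormalForm (add d x) :=
            mk_nf_add nf_d hx (by simp) hxe (by simp)
          have hsv : s = add d x := normal_steps hsteps hn
          subst hsv; simp [dc]
      | add a b =>
          have ha := hv.add_left
          have hb := hv.add_right
          obtain ⟨s1, hs1, hn1⟩ := exists_nf (add b x)
          have bound1 : mu (add b x) < n := by
            have hp := mu_pos a
            simp only [mu] at hmu ⊢; omega
          have h1 : dc s1 = dc b + dc x := IH b x s1 bound1 hb hx hs1 hn1
          have hreach : Steps (add (add a b) x) (add a s1) :=
            steps_head (Step.root (Root.assoc a b x)) (steps_addR hs1)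
          have h2 : Steps (add a s1) s := steps_normal_to hsteps hs hreach
          have bound2 : mu (add a s1) < n := by
            have e1 := steps_mu_le hs1
            simp only [mu] at hmu e1 ⊢; omega
          have h3 : dc s = dc a + dc s1 := IH a s1 s bound2 ha hn1 h2 hs
          simp only [dc] at *; omega
      | app p q =>
          have hn : NormalForm (add (app p q) x) :=
            mk_nf_add hv hx (by simp) hxe (by simp)
          have hsv : s = add (app p q) x := normal_steps hsteps hn
          subst hsv; simp [dc]

lemma count_lemma : ∀ (n : ℕ), ∀ u v r : Tm, mu (app u v) < n → NormalForm u → NormalForm v →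
    v ≠ e → Steps (app u v) r → NormalForm r → dc u + dc v ≤ dc r := by
  intro n
  induction n with
  | zero => intro u v r h; exact absurd h (Nat.not_lt_zero _)
  | succ n IH =>
      intro u v r hmu hu hv hve hsteps hr
      cases u with
      | e =>
          have hrv : r = v := steps_normal_unique hsteps (steps_one (Step.root (Root.appE v))) hr hv
          subst hrv; simp [dc]
      | d =>
          have hn : NormalForm (app d v) :=
            mk_nf_app nf_d hv (by simp) (by simp) (by simp) (fun h => hve h.2)
          have hrv : r = app d v := normal_steps hsteps hn
          subst hrv; simp [dc]
      | add a b =>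
          obtain ⟨r1, hr1, hn1⟩ := exists_nf (app a v)
          have hb1 : mu (app b (app a v)) < n := by
            have st := step_mu (Step.root (Root.appAdd a b v)); omega
          have hav : mu (app a v) < n := lt_trans (mu_arg_lt b (app a v)) hb1
          have d1 : dc a + dc v ≤ dc r1 := IH _ _ _ hav hu.add_left hv hve hr1 hn1
          have hdv : 1 ≤ dc v := dc_pos hv hve
          have hr1e : r1 ≠ e := by
            intro h; subst h; simp [dc] at d1; omega
          have hreach : Steps (app (add a b) v) (app b r1) :=
            steps_head (Step.root (Root.appAdd a b v)) (steps_appR hr1)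
          have h2 : Steps (app b r1) r := steps_normal_to hsteps hr hreach
          have hmu2 : mu (app b r1) < n := by
            have e1 := steps_mu_le (steps_appR (a := b) hr1); omega
          have d2 : dc b + dc r1 ≤ dc r := IH _ _ _ hmu2 hu.add_right hn1 hr1e h2 hr
          simp only [dc] at *; omega
      | app p q =>
          rcases normal_fn_shape hu with hp | ⟨p1, q1, heq, hpd⟩
          · subst hp
            have hxe : q ≠ e := fun h => hu.app_not_de ⟨rfl, h⟩
            have hxn : NormalForm q := hu.app_right
            obtain ⟨s1, hs1, hn1⟩ := exists_nf (add v q)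
            have hdc1 : dc s1 = dc v + dc q :=
              acc_nf (mu (add v q) + 1) v q s1 (Nat.lt_succ_self _) hv hxn hs1 hn1
            have hdv : 1 ≤ dc v := dc_pos hv hve
            have hs1e : s1 ≠ e := by
              intro h; subst h; simp [dc] at hdc1; omega
            have hstep0 : Step (app (app d q) v) (app q (add v q)) := Step.root (Root.appD q v)
            have hreach : Steps (app (app d q) v) (app q s1) :=
              steps_head hstep0 (steps_appR hs1)
            have h2 : Steps (app q s1) r := steps_normal_to hsteps hr hreach
            have hmu2 : mu (app q s1) < n := by
              have e0 := step_mu hstep0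
              have e1 := steps_mu_le (steps_appR (a := q) hs1)
              omega
            have d2 : dc q + dc s1 ≤ dc r := IH _ _ _ hmu2 hxn hn1 hs1e h2 hr
            have hdq : 1 ≤ dc q := dc_pos hxn hxe
            simp only [dc] at *; omega
          · subst heq
            have hn : NormalForm (app (app (app p1 q1) q) v) := by
              refine mk_nf_app hu hv (by simp) (by simp) ?_ (by simp)
              intro x hx
              injection hx with h1 _
              exact Tm.noConfusion h1
            have hrv : r = app (app (app p1 q1) q) v := normal_steps hsteps hn
            subst hrv; simp [dc]

lemma shape_lemma : ∀ (n : ℕ), ∀ u v r : Tm, mu (app u v) < n → NormalForm u → NormalForm v →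
    u ≠ e → Steps (app u v) r → NormalForm r → r = e ∨ ∃ p q, r = app p q := by
  intro n
  induction n with
  | zero => intro u v r h; exact absurd h (Nat.not_lt_zero _)
  | succ n IH =>
      intro u v r hmu hu hv hue hsteps hr
      cases u with
      | e => exact absurd rfl hue
      | d =>
          by_cases hve : v = e
          · subst hve
            have hre : r = e := steps_normal_unique hsteps (steps_one (Step.root Root.dE)) hr nf_e
            exact Or.inl hre
          · have hn : NormalForm (app d v) :=
              mk_nf_app nf_d hv (by simp) (by simp) (by simp) (fun h => hve h.2)
            have hrv : r = app d v := normal_steps hsteps hn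
            exact Or.inr ⟨d, v, hrv⟩
      | add a b =>
          obtain ⟨r1, hr1, hn1⟩ := exists_nf (app a v)
          have hb1 : mu (app b (app a v)) < n := by
            have st := step_mu (Step.root (Root.appAdd a b v)); omega
          have hreach : Steps (app (add a b) v) (app b r1) :=
            steps_head (Step.root (Root.appAdd a b v)) (steps_appR hr1)
          have h2 : Steps (app b r1) r := steps_normal_to hsteps hr hreach
          have hmu2 : mu (app b r1) < n := by
            have e1 := steps_mu_le (steps_appR (a := b) hr1); omega
          exact IH _ _ _ hmu2 hu.add_right hn1 hu.add_ne_e_right h2 hr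
      | app p q =>
          rcases normal_fn_shape hu with hp | ⟨p1, q1, heq, hpd⟩
          · subst hp
            have hxe : q ≠ e := fun h => hu.app_not_de ⟨rfl, h⟩
            have hxn : NormalForm q := hu.app_right
            obtain ⟨s1, hs1, hn1⟩ := exists_nf (add v q)
            have hstep0 : Step (app (app d q) v) (app q (add v q)) := Step.root (Root.appD q v)
            have hreach : Steps (app (app d q) v) (app q s1) :=
              steps_head hstep0 (steps_appR hs1)
            have h2 : Steps (app q s1) r := steps_normal_to hsteps hr hreach
            have hmu2 : mu (app q s1) < n := by
              have e0 := step_mu hstep0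
              have e1 := steps_mu_le (steps_appR (a := q) hs1)
              omega
            exact IH _ _ _ hmu2 hxn hn1 hxe h2 hr
          · subst heq
            have hn : NormalForm (app (app (app p1 q1) q) v) := by
              refine mk_nf_app hu hv (by simp) (by simp) ?_ (by simp)
              intro x hx
              injection hx with h1 _
              exact Tm.noConfusion h1
            have hrv : r = app (app (app p1 q1) q) v := normal_steps hsteps hn
            exact Or.inr ⟨_, _, hrv⟩

/-! ### Final assembly -/

lemma succ_mod_ne {n k : ℕ} (hn : 2 ≤ n) : k % n ≠ (k + 1) % n := by
  intro h
  have h1 : (k % n + 1) % n = (k + 1) % n := Nat.mod_add_mod k n 1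
  have hm : k % n < n := Nat.mod_lt _ (by omega)
  by_cases h2 : k % n + 1 < n
  · rw [Nat.mod_eq_of_lt h2] at h1; omega
  · have h3 : k % n + 1 = n := by omega
    rw [h3, Nat.mod_self] at h1; omega

lemma mu_app_e_gt (u : Tm) : mu u < mu (app u e) := by
  have h := Nat.lt_two_pow_self (n := mu u)
  simp only [mu]; omega


/-- no cycles of length ≥ 2: there are no cycles of distinct
normal forms t_0, …, t_{n-1} (n ≥ 2) with t_i·e ≡ t_{i+1 mod n}. -/
theorem no_cycles :
    ∀ n : ℕ, (hn : 2 ≤ n) → ∀ t : Fin n → Tm,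
      (∀ i, NormalForm (t i)) → Function.Injective t →
      (∀ i : Fin n, TermEq (app (t i) e) (t ⟨(i.val + 1) % n, Nat.mod_lt _ (by omega)⟩)) →
      False := by
  intro n hn t hnf hinj hcyc
  have key : ∀ (i j : Fin n), (i.val + 1) % n = j.val → Steps (app (t i) e) (t j) := by
    intro i j hij
    have h := termEq_steps_normal (hcyc i) (hnf _)
    have hj : j = ⟨(i.val + 1) % n, Nat.mod_lt _ (by omega)⟩ := Fin.ext hij.symm
    rw [hj]
    exact h
  set T : ℕ → Tm := fun k => t ⟨k % n, Nat.mod_lt _ (by omega)⟩ with hT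
  have hTnf : ∀ k, NormalForm (T k) := fun k => hnf _
  have hstep : ∀ k, Steps (app (T k) e) (T (k + 1)) :=
    fun k => key ⟨k % n, Nat.mod_lt _ (by omega)⟩ ⟨(k + 1) % n, Nat.mod_lt _ (by omega)⟩
      (Nat.mod_add_mod k n 1)
  have hTper : ∀ k, T (k + n) = T k := by
    intro k
    show t _ = t _
    congr 1
    exact Fin.ext (Nat.add_mod_right k n)
  have hinj' : ∀ k j : ℕ, T k = T j → k % n = j % n := by
    intro k j h
    exact congrArg Fin.val (hinj h)
  -- no T k is e
  have hne : ∀ k, T k ≠ e := by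
    intro k hk
    have h1 : Steps (app e e) (T (k + 1)) := by have := hstep k; rwa [hk] at this
    have h2 : T (k + 1) = e :=
      steps_normal_unique h1 (steps_one (Step.root (Root.appE e))) (hTnf _) nf_e
    have h3 : T k = T (k + 1) := by rw [hk, h2]
    exact succ_mod_ne hn (hinj' _ _ h3)
  -- every T (k+1) is an app
  have happ1 : ∀ k, ∃ p q, T (k + 1) = app p q := by
    intro k
    rcases shape_lemma (mu (app (T k) e) + 1) (T k) e (T (k + 1)) (Nat.lt_succ_self _)
      (hTnf k) nf_e (hne k) (hstep k) (hTnf (k + 1)) with h | h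
    · exact absurd h (hne (k + 1))
    · exact h
  have happ : ∀ k, ∃ p q, T k = app p q := by
    intro k
    obtain ⟨p, q, h⟩ := happ1 (k + n - 1)
    rw [show k + n - 1 + 1 = k + n from by omega, hTper k] at h
    exact ⟨p, q, h⟩
  -- dichotomy
  by_cases hc : ∃ k a b g, T k = app (app a b) g
  · -- case II: sizes strictly increase forever, contradiction with periodicity
    obtain ⟨k0, a0, b0, g0, h0⟩ := hc
    have grow : ∀ j, (∃ a b g, T (k0 + j) = app (app a b) g) ∧
        mu (T k0) + j ≤ mu (T (k0 + j)) := by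
      intro j
      induction j with
      | zero => simp only [Nat.add_zero]; exact ⟨⟨a0, b0, g0, h0⟩, by omega⟩
      | succ j ih =>
          obtain ⟨⟨a, b, g, hj⟩, hmu⟩ := ih
          have hu := hTnf (k0 + j)
          rw [hj] at hu
          have hnapp : NormalForm (app (app (app a b) g) e) := by
            refine mk_nf_app hu nf_e (by simp) (by simp) ?_ (by simp)
            intro x hx
            injection hx with h1 _
            exact Tm.noConfusion h1
          have hsk := hstep (k0 + j)
          rw [hj] at hsk
          have heq : T (k0 + j + 1) = app (app (app a b) g) e :=
            normal_steps hsk hnapp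
          refine ⟨⟨app a b, g, e, by rw [show k0 + (j+1) = k0 + j + 1 from by omega, heq]⟩, ?_⟩
          have hgt := mu_app_e_gt (app (app a b) g)
          rw [show k0 + (j+1) = k0 + j + 1 from by omega, heq]
          rw [hj] at hmu
          omega
    obtain ⟨_, hmu⟩ := grow n
    rw [hTper k0] at hmu
    omega
  · -- all T k = app d x_k
    push_neg at hc
    have hdx : ∀ k, ∃ x, T k = app d x := by
      intro k
      obtain ⟨p, q, h⟩ := happ k
      have hu := hTnf k
      rw [h] at hu
      rcases normal_fn_shape hu with hp | ⟨p1, q1, heq, _⟩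
      · exact ⟨q, by rw [h, hp]⟩
      · exact absurd (by rw [h, heq]) (hc k p1 q1 q)
    -- the recurrence on d-counts
    have hrec : ∀ k x x', T k = app d x → T (k + 1) = app d x' →
        2 * dc x ≤ 1 + dc x' := by
      intro k x x' hx hx'
      have hu := hTnf k
      rw [hx] at hu
      have hxn : NormalForm x := hu.app_right
      have hxe : x ≠ e := fun h => hu.app_not_de ⟨rfl, h⟩
      have hsk := hstep k
      rw [hx] at hsk
      have hreach : Steps (app (app d x) e) (app x x) :=
        steps_two (Step.root (Root.appD x e)) (Step.appR (Step.root (Root.eAdd x)))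
      have h2 : Steps (app x x) (T (k + 1)) :=
        steps_normal_to hsk (hTnf (k + 1)) hreach
      have h3 : dc x + dc x ≤ dc (T (k + 1)) :=
        count_lemma (mu (app x x) + 1) x x (T (k + 1)) (Nat.lt_succ_self _)
          hxn hxn hxe h2 (hTnf (k + 1))
      rw [hx'] at h3
      simp only [dc] at h3 ⊢
      omega
    have hm2 : ∀ k, 2 ≤ dc (T k) := by
      intro k
      obtain ⟨x, hx⟩ := hdx k
      have hu := hTnf k
      rw [hx] at hu
      have := dc_pos hu.app_right (fun h => hu.app_not_de ⟨rfl, h⟩)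
      rw [hx]; simp only [dc]; omega
    have hmrec : ∀ k, 2 * dc (T k) ≤ 2 + dc (T (k + 1)) := by
      intro k
      obtain ⟨x, hx⟩ := hdx k
      obtain ⟨x', hx'⟩ := hdx (k + 1)
      have := hrec k x x' hx hx'
      rw [hx, hx']; simp only [dc]; omega
    by_cases hbig : ∃ k0, 3 ≤ dc (T k0)
    · obtain ⟨k0, hk0⟩ := hbig
      have grow : ∀ j, dc (T k0) + j ≤ dc (T (k0 + j)) ∧ 3 ≤ dc (T (k0 + j)) := by
        intro j
        induction j with
        | zero => simp only [Nat.add_zero]; exact ⟨by omega, hk0⟩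
        | succ j ih =>
            have hr := hmrec (k0 + j)
            rw [show k0 + (j + 1) = k0 + j + 1 from by omega]
            omega
      obtain ⟨h1, _⟩ := grow n
      rw [hTper k0] at h1
      omega
    · push_neg at hbig
      have hall : ∀ k, T k = app d d := by
        intro k
        obtain ⟨x, hx⟩ := hdx k
        have hu := hTnf k
        rw [hx] at hu
        have h2 := hm2 k
        have h3 := hbig k
        rw [hx] at h2 h3
        simp only [dc] at h2 h3
        have hxd : x = d := dc_one_eq_d hu.app_right (by omega)
        rw [hx, hxd]
      have h01 : T 0 = T 1 := by rw [hall 0, hall 1]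
      have := hinj' 0 1 h01
      rw [Nat.zero_mod, Nat.mod_eq_of_lt (by omega : 1 < n)] at this
      omega
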